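/- Let M be a compact topological space, μ a finite nonatomic Borel measure on M with full support, p : M → ℝ continuous with p > 0, and K : M × M → ℝ a continuous strictly positive kernel with K(x,x) = 1. Define for f ∈ C(M) the operator (L f)(x) = ∫ K(x,y)·(f(x) − f(y))·p(y) dμ(y). If p₁, p₂ are two strictly positive continuous densities whose associated operators L₁, L₂ coincide on C(M), then p₁ = p₂. -/

import Mathlib

open MeasureTheory

/-- Any continuous real function on a compact space is integrable w.r.t. a finite measure. -/
lemma stmt6_aux_integrable {M : Type*} [TopologicalSpace M] [CompactSpace M]
    [MeasurableSpace M] [BorelSpace M] (μ : Measure M) [IsFiniteMeasure μ]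
    {g : M → ℝ} (hg : Continuous g) : Integrable g μ :=
  hg.integrable_of_hasCompactSupport (HasCompactSupport.of_compactSpace g)

/-- If a nonneg continuous function has zero integral w.r.t. a fully supported measure,
it vanishes identically. -/
lemma stmt6_aux_zero {M : Type*} [TopologicalSpace M] [CompactSpace M]
    [MeasurableSpace M] [BorelSpace M] (μ : Measure M) [IsFiniteMeasure μ]
    [μ.IsOpenPosMeasure] {g : M → ℝ} (hg : Continuous g) (hnn : ∀ y, 0 ≤ g y)
    (h0 : ∫ y, g y ∂μ = 0) : ∀ y, g y = 0 := by
  have hae : g =ᵐ[μ] 0 :=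
    (integral_eq_zero_iff_of_nonneg hnn (stmt6_aux_integrable μ hg)).mp h0
  have := (hg.ae_eq_iff_eq μ continuous_const).mp hae
  intro y; exact congrFun this y

/-- Density identifiability for the unnormalized continuous graph Laplace
operator with fixed continuous strictly positive kernel `K` (with `K(x,x)=1`) and fixed
finite nonatomic fully supported measure `μ`: equality of the operators associated to two
strictly positive continuous densities forces the densities to coincide. -/
theorem stmt_6 {M : Type*} [TopologicalSpace M] [CompactSpace M] [T2Space M]
    [MeasurableSpace M] [BorelSpace M]
    (μ : Measure M) [IsFiniteMeasure μ] [NullSingletonClass μ] [μ.IsOpenPosMeasure]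
    (K : M × M → ℝ) (hK : Continuous K) (hKpos : ∀ x y, 0 < K (x, y))
    (hKdiag : ∀ x, K (x, x) = 1)
    (p₁ p₂ : M → ℝ) (hp₁ : Continuous p₁) (hp₂ : Continuous p₂)
    (hp₁pos : ∀ x, 0 < p₁ x) (hp₂pos : ∀ x, 0 < p₂ x)
    (h : ∀ f : C(M, ℝ), ∀ x : M,
      ∫ y, K (x, y) * (f x - f y) * p₁ y ∂μ =
      ∫ y, K (x, y) * (f x - f y) * p₂ y ∂μ) :
    ∀ x, p₁ x = p₂ x := by
  intro x
  set q : M → ℝ := fun y => p₁ y - p₂ y with hq_def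
  have hq : Continuous q := hp₁.sub hp₂
  -- continuity of y ↦ K (z, y) for fixed z
  have hKz : ∀ z : M, Continuous fun y => K (z, y) := fun z =>
    hK.comp (continuous_const.prodMk continuous_id)
  -- key identity: for all f and z, ∫ K (z,y) * (f z - f y) * q y = 0
  have key : ∀ f : C(M, ℝ), ∀ z : M,
      ∫ y, K (z, y) * (f z - f y) * q y ∂μ = 0 := by
    intro f z
    have h1 : Integrable (fun y => K (z, y) * (f z - f y) * p₁ y) μ :=
      stmt6_aux_integrable μ (((hKz z).mul (continuous_const.sub f.continuous)).mul hp₁)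
    have h2 : Integrable (fun y => K (z, y) * (f z - f y) * p₂ y) μ :=
      stmt6_aux_integrable μ (((hKz z).mul (continuous_const.sub f.continuous)).mul hp₂)
    have : ∫ y, (K (z, y) * (f z - f y) * p₁ y - K (z, y) * (f z - f y) * p₂ y) ∂μ = 0 := by
      rw [integral_sub h1 h2, h f z, sub_self]
    rw [← this]
    congr 1; funext y; simp [hq_def]; ring
  -- Step 1: q has a zero
  have hzero : ∃ x₀, q x₀ = 0 := by
    by_contra hno
    push_neg at hno
    -- pick a point x₂ ≠ x
    have hx2 : ∃ x₂ : M, x₂ ≠ x := by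
      by_contra hall
      push_neg at hall
      have huniv : (Set.univ : Set M) = {x} := by
        ext y; simp [hall y]
      have h1 : 0 < μ Set.univ := isOpen_univ.measure_pos μ ⟨x, trivial⟩
      rw [huniv, measure_singleton] at h1
      exact lt_irrefl _ h1
    obtain ⟨x₂, hx₂⟩ := hx2
    -- Urysohn function: 0 at x, 1 at x₂
    obtain ⟨g, hg0, hg1, hg01⟩ :=
      exists_continuous_zero_one_of_isClosed (isClosed_singleton (x := x))
        (isClosed_singleton (x := x₂)) (by simp [Set.disjoint_singleton, Ne.symm hx₂])
    -- f = g / q is continuous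
    set f : C(M, ℝ) := ⟨fun y => g y / q y, g.continuous.div hq hno⟩ with hf_def
    have hfx : f x = 0 := by
      simp only [hf_def, ContinuousMap.coe_mk]
      rw [hg0 rfl]; simp
    have hkey := key f x
    have heq : ∀ y, K (x, y) * (f x - f y) * q y = -(K (x, y) * g y) := by
      intro y
      have hc : g y / q y * q y = g y := div_mul_cancel₀ _ (hno y)
      rw [hfx]
      simp only [hf_def, ContinuousMap.coe_mk]
      calc K (x, y) * (0 - g y / q y) * q y = -(K (x, y) * (g y / q y * q y)) := by ring
        _ = -(K (x, y) * g y) := by rw [hc]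
    rw [show (fun y => K (x, y) * (f x - f y) * q y) = fun y => -(K (x, y) * g y) from
      funext heq] at hkey
    rw [integral_neg, neg_eq_zero] at hkey
    have hvan : ∀ y, K (x, y) * g y = 0 := by
      refine stmt6_aux_zero μ ((hKz x).mul g.continuous) (fun y => ?_) hkey
      exact mul_nonneg (hKpos x y).le (hg01 y).1
    have := hvan x₂
    rw [hg1 rfl] at this
    simp at this
    exact absurd this (ne_of_gt (hKpos x x₂))
  obtain ⟨x₀, hx₀⟩ := hzero
  -- Step 2: plug f = q at x₀
  have hkey := key ⟨q, hq⟩ x₀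
  simp only [ContinuousMap.coe_mk, hx₀] at hkey
  have heq : ∀ y, K (x₀, y) * (0 - q y) * q y = -(K (x₀, y) * (q y * q y)) := by
    intro y; ring
  rw [show (fun y => K (x₀, y) * (0 - q y) * q y) = fun y => -(K (x₀, y) * (q y * q y)) from
    funext heq] at hkey
  rw [integral_neg, neg_eq_zero] at hkey
  have hvan : ∀ y, K (x₀, y) * (q y * q y) = 0 := by
    refine stmt6_aux_zero μ ((hKz x₀).mul (hq.mul hq)) (fun y => ?_) hkey
    exact mul_nonneg (hKpos x₀ y).le (mul_self_nonneg _)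
  have hqx : q x = 0 := by
    have := hvan x
    rcases mul_eq_zero.mp this with h1 | h1
    · exact absurd h1 (ne_of_gt (hKpos x₀ x))
    · exact mul_self_eq_zero.mp h1
  have : p₁ x - p₂ x = 0 := hqx
  linarith
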